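/- If two chunks ch and ch' have disjoint sets of positions, then their concatenation ch·ch' is a chunk. -/

import Mathlib

/-- An (idealised E)UTxO transaction: a finite set of inputs (position, key),
a finite set of outputs (position, data, validator), not both empty.
Positions (atoms) are modelled by natural numbers. -/
structure Tx (α β V : Type) where
  inputs : Set (ℕ × α)
  outputs : Set (ℕ × β × V)
  fin_inputs : inputs.Finite
  fin_outputs : outputs.Finite
  nontrivial : inputs.Nonempty ∨ outputs.Nonempty

/-- `val v d tx i` : validator `v`, carrying state data `d`, validates the
pointed transaction `tx @ i` (a transaction `tx` with distinguished input `i`). -/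
def IsChunk {α β V : Type} (val : V → β → Tx α β V → (ℕ × α) → Prop)
    (txs : List (Tx α β V)) : Prop :=
  (∀ m n (hm : m < txs.length) (hn : n < txs.length),
      ∀ o ∈ (txs.get ⟨m, hm⟩).outputs, ∀ o' ∈ (txs.get ⟨n, hn⟩).outputs,
        o.1 = o'.1 → m = n ∧ o = o') ∧
  (∀ m n (hm : m < txs.length) (hn : n < txs.length),
      ∀ i ∈ (txs.get ⟨m, hm⟩).inputs, ∀ i' ∈ (txs.get ⟨n, hn⟩).inputs,
        i.1 = i'.1 → m = n ∧ i = i') ∧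
  (∀ m n (hm : m < txs.length) (hn : n < txs.length),
      ∀ i ∈ (txs.get ⟨m, hm⟩).inputs, ∀ o ∈ (txs.get ⟨n, hn⟩).outputs,
        i.1 = o.1 → n < m ∧ val o.2.2 o.2.1 (txs.get ⟨m, hm⟩) i)

/-- Input positions of a transaction. -/
def inputPos {α β V : Type} (tx : Tx α β V) : Set ℕ := {a | ∃ i ∈ tx.inputs, i.1 = a}

/-- Output positions of a transaction. -/
def outputPos {α β V : Type} (tx : Tx α β V) : Set ℕ := {a | ∃ o ∈ tx.outputs, o.1 = a}

/-- Positions of a transaction. -/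
def posTx {α β V : Type} (tx : Tx α β V) : Set ℕ := inputPos tx ∪ outputPos tx

/-- Positions of a list of transactions. -/
def posList {α β V : Type} (txs : List (Tx α β V)) : Set ℕ :=
  {a | ∃ tx ∈ txs, a ∈ posTx tx}

/-- Unspent transaction inputs: positions of inputs not pointing to an earlier output. -/
def utxi {α β V : Type} (txs : List (Tx α β V)) : Set ℕ :=
  {a | ∃ m, ∃ hm : m < txs.length, ∃ i ∈ (txs.get ⟨m, hm⟩).inputs, i.1 = a ∧
        ∀ n, ∀ hn : n < txs.length, n < m →
          ∀ o ∈ (txs.get ⟨n, hn⟩).outputs, o.1 ≠ a}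

/-- Unspent transaction outputs: positions of outputs not pointed to by a later input. -/
def utxo {α β V : Type} (txs : List (Tx α β V)) : Set ℕ :=
  {a | ∃ n, ∃ hn : n < txs.length, ∃ o ∈ (txs.get ⟨n, hn⟩).outputs, o.1 = a ∧
        ∀ m, ∀ hm : m < txs.length, n < m →
          ∀ i ∈ (txs.get ⟨m, hm⟩).inputs, i.1 ≠ a}

/-- Spent transaction channels: positions of outputs pointed to by a later input. -/
def stx {α β V : Type} (txs : List (Tx α β V)) : Set ℕ :=
  {a | ∃ n, ∃ hn : n < txs.length, ∃ o ∈ (txs.get ⟨n, hn⟩).outputs, o.1 = a ∧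
        ∃ m, ∃ hm : m < txs.length, n < m ∧
          ∃ i ∈ (txs.get ⟨m, hm⟩).inputs, i.1 = a}

/-- Chunks `x` and `x'` commute: `x ++ x'` and `x' ++ x` have the same validity
behaviour in every context. -/
def Commuting {α β V : Type} (val : V → β → Tx α β V → (ℕ × α) → Prop)
    (x x' : List (Tx α β V)) : Prop :=
  ∀ z : List (Tx α β V),
    (IsChunk val ((x ++ x') ++ z) ↔ IsChunk val ((x' ++ x) ++ z)) ∧
    (IsChunk val (z ++ (x ++ x')) ↔ IsChunk val (z ++ (x' ++ x)))

variable {α β V : Type}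

/-- **Statement 4.** Chunks with disjoint sets of positions compose to a chunk. -/
theorem fresh_chunks_defined (val : V → β → Tx α β V → (ℕ × α) → Prop)
    (ch ch' : List (Tx α β V)) (h : IsChunk val ch) (h' : IsChunk val ch')
    (hdisj : posList ch ∩ posList ch' = ∅) :
    IsChunk val (ch ++ ch') := by
  obtain ⟨ho, hi, hio⟩ := h
  obtain ⟨ho', hi', hio'⟩ := h'
  have hdis : ∀ a, a ∈ posList ch → a ∈ posList ch' → False := by
    intro a h1 h2
    have : a ∈ posList ch ∩ posList ch' := ⟨h1, h2⟩
    rw [hdisj] at this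
    exact this
  have hlen : (ch ++ ch').length = ch.length + ch'.length := by simp
  have hget1 : ∀ m (hm : m < ch.length) (hm' : m < (ch ++ ch').length),
      (ch ++ ch').get ⟨m, hm'⟩ = ch.get ⟨m, hm⟩ := by
    intro m hm hm'
    simp [List.getElem_append_left hm]
  have hget2 : ∀ m (hm' : m < (ch ++ ch').length) (hge : ¬ m < ch.length)
      (h2 : m - ch.length < ch'.length),
      (ch ++ ch').get ⟨m, hm'⟩ = ch'.get ⟨m - ch.length, h2⟩ := by
    intro m hm' hge h2
    simp [List.getElem_append_right (by omega : ch.length ≤ m)]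
  have hmemI : ∀ m (hm : m < ch.length) i, i ∈ (ch.get ⟨m, hm⟩).inputs →
      (i : ℕ × α).1 ∈ posList ch := by
    intro m hm i hi0
    simp only [posList, posTx, inputPos, outputPos, Set.mem_setOf_eq, Set.mem_union]
    exact ⟨_, List.get_mem ch ⟨m, hm⟩, Or.inl ⟨i, hi0, rfl⟩⟩
  have hmemO : ∀ m (hm : m < ch.length) o, o ∈ (ch.get ⟨m, hm⟩).outputs →
      (o : ℕ × β × V).1 ∈ posList ch := by
    intro m hm o ho0
    simp only [posList, posTx, inputPos, outputPos, Set.mem_setOf_eq, Set.mem_union]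
    exact ⟨_, List.get_mem ch ⟨m, hm⟩, Or.inr ⟨o, ho0, rfl⟩⟩
  have hmemI' : ∀ m (hm : m < ch'.length) i, i ∈ (ch'.get ⟨m, hm⟩).inputs →
      (i : ℕ × α).1 ∈ posList ch' := by
    intro m hm i hi0
    simp only [posList, posTx, inputPos, outputPos, Set.mem_setOf_eq, Set.mem_union]
    exact ⟨_, List.get_mem ch' ⟨m, hm⟩, Or.inl ⟨i, hi0, rfl⟩⟩
  have hmemO' : ∀ m (hm : m < ch'.length) o, o ∈ (ch'.get ⟨m, hm⟩).outputs →
      (o : ℕ × β × V).1 ∈ posList ch' := by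
    intro m hm o ho0
    simp only [posList, posTx, inputPos, outputPos, Set.mem_setOf_eq, Set.mem_union]
    exact ⟨_, List.get_mem ch' ⟨m, hm⟩, Or.inr ⟨o, ho0, rfl⟩⟩
  refine ⟨?_, ?_, ?_⟩
  · intro m n hm hn o ho1 o' ho2 heq
    by_cases hmL : m < ch.length <;> by_cases hnL : n < ch.length
    · rw [hget1 m hmL hm] at ho1
      rw [hget1 n hnL hn] at ho2
      exact ho m n hmL hnL o ho1 o' ho2 heq
    · rw [hget1 m hmL hm] at ho1
      rw [hget2 n hn hnL (by rw [hlen] at hn; omega)] at ho2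
      exact absurd (hmemO' _ _ o' ho2) (fun hh => hdis o'.1 (heq ▸ hmemO m hmL o ho1) hh)
    · rw [hget2 m hm hmL (by rw [hlen] at hm; omega)] at ho1
      rw [hget1 n hnL hn] at ho2
      exact absurd (hmemO _ _ o' ho2) (fun hh => hdis o'.1 hh (heq ▸ hmemO' _ _ o ho1))
    · rw [hget2 m hm hmL (by rw [hlen] at hm; omega)] at ho1
      rw [hget2 n hn hnL (by rw [hlen] at hn; omega)] at ho2
      obtain ⟨he, he2⟩ := ho' _ _ _ _ o ho1 o' ho2 heq
      exact ⟨by omega, he2⟩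
  · intro m n hm hn i hi1 i' hi2 heq
    by_cases hmL : m < ch.length <;> by_cases hnL : n < ch.length
    · rw [hget1 m hmL hm] at hi1
      rw [hget1 n hnL hn] at hi2
      exact hi m n hmL hnL i hi1 i' hi2 heq
    · rw [hget1 m hmL hm] at hi1
      rw [hget2 n hn hnL (by rw [hlen] at hn; omega)] at hi2
      exact absurd (hmemI' _ _ i' hi2) (fun hh => hdis i'.1 (heq ▸ hmemI m hmL i hi1) hh)
    · rw [hget2 m hm hmL (by rw [hlen] at hm; omega)] at hi1
      rw [hget1 n hnL hn] at hi2
      exact absurd (hmemI _ _ i' hi2) (fun hh => hdis i'.1 hh (heq ▸ hmemI' _ _ i hi1))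
    · rw [hget2 m hm hmL (by rw [hlen] at hm; omega)] at hi1
      rw [hget2 n hn hnL (by rw [hlen] at hn; omega)] at hi2
      obtain ⟨he, he2⟩ := hi' _ _ _ _ i hi1 i' hi2 heq
      exact ⟨by omega, he2⟩
  · intro m n hm hn i hi1 o ho1 heq
    by_cases hmL : m < ch.length <;> by_cases hnL : n < ch.length
    · rw [hget1 m hmL hm] at hi1
      rw [hget1 n hnL hn] at ho1
      obtain ⟨hlt, hval⟩ := hio m n hmL hnL i hi1 o ho1 heq
      rw [hget1 m hmL hm]
      exact ⟨hlt, hval⟩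
    · rw [hget1 m hmL hm] at hi1
      rw [hget2 n hn hnL (by rw [hlen] at hn; omega)] at ho1
      exact absurd (hmemO' _ _ o ho1) (fun hh => hdis o.1 (heq ▸ hmemI m hmL i hi1) hh)
    · rw [hget2 m hm hmL (by rw [hlen] at hm; omega)] at hi1
      rw [hget1 n hnL hn] at ho1
      exact absurd (hmemO _ _ o ho1) (fun hh => hdis o.1 hh (heq ▸ hmemI' _ _ i hi1))
    · rw [hget2 m hm hmL (by rw [hlen] at hm; omega)] at hi1
      rw [hget2 n hn hnL (by rw [hlen] at hn; omega)] at ho1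
      obtain ⟨hlt, hval⟩ := hio' _ _ _ _ i hi1 o ho1 heq
      rw [hget2 m hm hmL (by rw [hlen] at hm; omega)]
      exact ⟨by omega, hval⟩
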